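/- Let H be a complex separable Hilbert space, A ∈ B(H), and G ⊂ H a countable family of vectors such that {e^{tA}g}_{g∈G, t∈[0,∞)} is a semi-continuous frame for H. If the semigroup {e^{tA}}_{t≥0} is exponentially stable, then there exists 0 < L < ∞ such that {e^{tA}g}_{g∈G, t∈[0,L]} is a semi-continuous frame for H. -/

import Mathlib

open MeasureTheory
open scoped ComplexInnerProductSpace

noncomputable section

variable {H : Type*} [NormedAddCommGroup H] [InnerProductSpace ℂ H] [CompleteSpace H]

/-- The operator exponential `e^{tA}` for a bounded operator `A`. -/
def expT (A : H →L[ℂ] H) (t : ℝ) : H →L[ℂ] H :=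
  NormedSpace.exp ((t : ℂ) • A)

/-- `G` is a Bessel system in `H`. -/
def IsBesselSet (G : Set H) : Prop :=
  ∃ K > (0 : ℝ), ∀ f : H, ∑' g : G, ‖⟪f, (g : H)⟫‖ ^ 2 ≤ K * ‖f‖ ^ 2

/-- `{e^{tA} g}_{g ∈ G, t ∈ S}` is a semi-continuous frame for `H`. -/
def SemiContFrame (A : H →L[ℂ] H) (G : Set H) (S : Set ℝ) : Prop :=
  ∃ c > (0 : ℝ), ∃ C > (0 : ℝ), ∀ f : H,
    c * ‖f‖ ^ 2 ≤ ∑' g : G, ∫ t in S, ‖⟪f, expT A t (g : H)⟫‖ ^ 2 ∧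
    ∑' g : G, ∫ t in S, ‖⟪f, expT A t (g : H)⟫‖ ^ 2 ≤ C * ‖f‖ ^ 2

/-- `{e^{t_j A} g}_{g ∈ G, j}` is a frame for `H`, for a finite list of times `t`. -/
def FinTimeFrame (A : H →L[ℂ] H) (G : Set H) {n : ℕ} (t : Fin n → ℝ) : Prop :=
  ∃ c > (0 : ℝ), ∃ C > (0 : ℝ), ∀ f : H,
    c * ‖f‖ ^ 2 ≤ ∑' g : G, ∑ j, ‖⟪f, expT A (t j) (g : H)⟫‖ ^ 2 ∧
    ∑' g : G, ∑ j, ‖⟪f, expT A (t j) (g : H)⟫‖ ^ 2 ≤ C * ‖f‖ ^ 2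

/-- `{e^{t_j A} g}_{g ∈ G, j ∈ ℕ}` is a frame for `H`, for a countable set of times `t`. -/
def NatTimeFrame (A : H →L[ℂ] H) (G : Set H) (t : ℕ → ℝ) : Prop :=
  ∃ c > (0 : ℝ), ∃ C > (0 : ℝ), ∀ f : H,
    c * ‖f‖ ^ 2 ≤ ∑' g : G, ∑' j : ℕ, ‖⟪f, expT A (t j) (g : H)⟫‖ ^ 2 ∧
    ∑' g : G, ∑' j : ℕ, ‖⟪f, expT A (t j) (g : H)⟫‖ ^ 2 ≤ C * ‖f‖ ^ 2

/-- The semigroup `{e^{tA}}_{t ≥ 0}` is exponentially stable. -/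
def ExpStable (A : H →L[ℂ] H) : Prop :=
  ∃ M ≥ (1 : ℝ), ∃ ω < (0 : ℝ), ∀ t : ℝ, 0 ≤ t → ‖expT A t‖ ≤ M * Real.exp (ω * t)

/- Auxiliary lemmas -/

lemma expT_continuous (A : H →L[ℂ] H) : Continuous (expT A) := by
  letI : NormedAlgebra ℚ (H →L[ℂ] H) := NormedAlgebra.restrictScalars ℚ ℂ _
  exact NormedSpace.exp_continuous.comp (Complex.continuous_ofReal.smul continuous_const)

lemma expT_add (A : H →L[ℂ] H) (s t : ℝ) :
    expT A (s + t) = expT A t * expT A s := by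
  unfold expT
  have hc : Commute ((t : ℂ) • A) ((s : ℂ) • A) :=
    ((Commute.refl A).smul_left _).smul_right _
  rw [show ((s + t : ℝ) : ℂ) • A = (t : ℂ) • A + (s : ℂ) • A by
    rw [Complex.ofReal_add, add_smul, add_comm]]
  letI : NormedAlgebra ℚ (H →L[ℂ] H) := NormedAlgebra.restrictScalars ℚ ℂ _
  exact NormedSpace.exp_add_of_commute hc

lemma phi_continuous (A : H →L[ℂ] H) (f g : H) :
    Continuous fun t : ℝ => ‖⟪f, expT A t g⟫‖ ^ 2 :=
  (continuous_const.inner ((expT_continuous A).clm_apply continuous_const)).norm.pow 2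

lemma phi_integrableOn (A : H →L[ℂ] H) {M ω : ℝ} (hM : 1 ≤ M) (hω : ω < 0)
    (hst : ∀ t : ℝ, 0 ≤ t → ‖expT A t‖ ≤ M * Real.exp (ω * t)) (f g : H) :
    IntegrableOn (fun t : ℝ => ‖⟪f, expT A t g⟫‖ ^ 2) (Set.Ici 0) := by
  have hM0 : (0 : ℝ) < M := lt_of_lt_of_le one_pos hM
  have hb : (0 : ℝ) < -(2 * ω) := by linarith
  have hd : IntegrableOn
      (fun t : ℝ => (M * ‖f‖ * ‖g‖) ^ 2 * Real.exp (-(-(2 * ω)) * t)) (Set.Ici 0) :=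
    ((integrableOn_Ici_iff_integrableOn_Ioi (by simp)).2 (exp_neg_integrableOn_Ioi 0 hb)).const_mul _
  refine hd.integrable.mono ((phi_continuous A f g).aestronglyMeasurable.restrict) ?_
  refine (ae_restrict_iff' measurableSet_Ici).2 (Filter.Eventually.of_forall fun t ht => ?_)
  have h1 : ‖⟪f, expT A t g⟫‖ ≤ ‖f‖ * (M * Real.exp (ω * t) * ‖g‖) := by
    calc ‖⟪f, expT A t g⟫‖ ≤ ‖f‖ * ‖expT A t g‖ := norm_inner_le_norm _ _
      _ ≤ ‖f‖ * (‖expT A t‖ * ‖g‖) := by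
          gcongr; exact (expT A t).le_opNorm g
      _ ≤ ‖f‖ * (M * Real.exp (ω * t) * ‖g‖) := by
          gcongr; exact hst t ht
  have h2 : ‖⟪f, expT A t g⟫‖ ^ 2 ≤ (‖f‖ * (M * Real.exp (ω * t) * ‖g‖)) ^ 2 := by
    apply pow_le_pow_left₀ (norm_nonneg _) h1
  have h3 : (‖f‖ * (M * Real.exp (ω * t) * ‖g‖)) ^ 2
      = (M * ‖f‖ * ‖g‖) ^ 2 * Real.exp (-(-(2 * ω)) * t) := by
    have he : Real.exp (ω * t) ^ 2 = Real.exp (-(-(2 * ω)) * t) := by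
      rw [sq, ← Real.exp_add]; ring_nf
    rw [mul_pow, mul_pow, mul_pow, he]; ring
  rw [Real.norm_of_nonneg (by positivity), Real.norm_of_nonneg (by positivity)]
  rw [← h3]; exact h2

lemma integral_Ioi_shift (F : ℝ → ℝ) (L : ℝ) :
    ∫ t in Set.Ioi L, F t = ∫ s in Set.Ioi (0 : ℝ), F (s + L) := by
  have h1 : MeasurePreserving (fun x : ℝ => x + L) volume volume :=
    measurePreserving_add_right volume L
  have h2 : MeasurableEmbedding (fun x : ℝ => x + L) :=
    (MeasurableEquiv.addRight L).measurableEmbedding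
  rw [← h1.setIntegral_preimage_emb h2 F (Set.Ioi L)]
  congr 1
  ext x
  simp

theorem stmt3
    {H : Type*} [NormedAddCommGroup H] [InnerProductSpace ℂ H] [CompleteSpace H]
    [TopologicalSpace.SeparableSpace H]
    (A : H →L[ℂ] H) (G : Set H) (hGc : G.Countable)
    (hframe : SemiContFrame A G (Set.Ici 0))
    (hstable : ExpStable A) :
    ∃ L : ℝ, 0 < L ∧ SemiContFrame A G (Set.Icc 0 L) := by
  obtain ⟨c, hc, C, hC, hfr⟩ := hframe
  obtain ⟨M, hM, ω, hω, hst⟩ := hstable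
  have hM0 : (0 : ℝ) < M := lt_of_lt_of_le one_pos hM
  set ε := c / (2 * C * M ^ 2) with hεdef
  have hεpos : 0 < ε := by positivity
  refine ⟨max 1 (Real.log ε / (2 * ω)), lt_of_lt_of_le one_pos (le_max_left _ _), ?_⟩
  set L := max 1 (Real.log ε / (2 * ω)) with hLdef
  have hL0 : (0 : ℝ) ≤ L := le_trans zero_le_one (le_max_left _ _)
  have hexpL : Real.exp (2 * (ω * L)) ≤ ε := by
    rw [← Real.exp_log hεpos]
    apply Real.exp_le_exp.2
    have h2ω : 2 * ω < 0 := by linarith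
    have hge : Real.log ε / (2 * ω) ≤ L := le_max_right _ _
    have h := mul_le_mul_of_nonpos_left hge h2ω.le
    rw [mul_div_cancel₀ _ (ne_of_lt h2ω)] at h
    linarith
  have htailconst : C * (M * Real.exp (ω * L)) ^ 2 ≤ c / 2 := by
    have h1 : (M * Real.exp (ω * L)) ^ 2 = M ^ 2 * Real.exp (2 * (ω * L)) := by
      rw [mul_pow, sq (Real.exp _), ← Real.exp_add]; ring_nf
    rw [h1]
    calc C * (M ^ 2 * Real.exp (2 * (ω * L))) ≤ C * (M ^ 2 * ε) := by gcongr
      _ = c / 2 := by rw [hεdef]; field_simp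
  refine ⟨c / 2, by linarith, C, hC, fun f => ?_⟩
  by_cases hf0 : f = 0
  · subst hf0
    simp
  obtain ⟨hlow, hup⟩ := hfr f
  have hnf : 0 < ‖f‖ := norm_pos_iff.2 hf0
  have hIntB : ∀ (f g : H),
      IntegrableOn (fun t : ℝ => ‖⟪f, expT A t g⟫‖ ^ 2) (Set.Ici 0) :=
    fun f g => phi_integrableOn A hM hω hst f g
  have hnn : ∀ (S : Set ℝ) (g : H), 0 ≤ ∫ t in S, ‖⟪f, expT A t g⟫‖ ^ 2 :=
    fun S g => integral_nonneg fun t => by positivity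
  have key : ∀ g : H, (∫ t in Set.Ici (0 : ℝ), ‖⟪f, expT A t g⟫‖ ^ 2)
      = (∫ t in Set.Icc 0 L, ‖⟪f, expT A t g⟫‖ ^ 2)
        + ∫ t in Set.Ioi L, ‖⟪f, expT A t g⟫‖ ^ 2 := by
    intro g
    rw [← Set.Icc_union_Ioi_eq_Ici hL0]
    exact setIntegral_union ((Set.Iic_disjoint_Ioi le_rfl).mono Set.Icc_subset_Iic_self le_rfl)
      measurableSet_Ioi ((hIntB f g).mono_set Set.Icc_subset_Ici_self)
      ((hIntB f g).mono_set fun x hx => hL0.trans hx.le)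
  have htail : ∀ g : H, (∫ t in Set.Ioi L, ‖⟪f, expT A t g⟫‖ ^ 2)
      = ∫ t in Set.Ici (0 : ℝ), ‖⟪ContinuousLinearMap.adjoint (expT A L) f, expT A t g⟫‖ ^ 2 := by
    intro g
    rw [integral_Ici_eq_integral_Ioi,
      integral_Ioi_shift (fun t => ‖⟪f, expT A t g⟫‖ ^ 2) L]
    refine integral_congr_ae (Filter.Eventually.of_forall fun s => ?_)
    simp only [expT_add A s L, ContinuousLinearMap.mul_apply,
      ContinuousLinearMap.adjoint_inner_left]
  obtain ⟨hlow', hup'⟩ := hfr (ContinuousLinearMap.adjoint (expT A L) f)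
  have hadj : ‖ContinuousLinearMap.adjoint (expT A L) f‖ ≤ M * Real.exp (ω * L) * ‖f‖ := by
    calc ‖ContinuousLinearMap.adjoint (expT A L) f‖
        ≤ ‖ContinuousLinearMap.adjoint (expT A L)‖ * ‖f‖ :=
          ContinuousLinearMap.le_opNorm _ _
      _ = ‖expT A L‖ * ‖f‖ := by rw [ContinuousLinearMap.adjoint.norm_map]
      _ ≤ M * Real.exp (ω * L) * ‖f‖ := by gcongr; exact hst L hL0
  have htails : ∑' g : G, ∫ t in Set.Ioi L, ‖⟪f, expT A t (g : H)⟫‖ ^ 2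
      ≤ (c / 2) * ‖f‖ ^ 2 := by
    calc ∑' g : G, ∫ t in Set.Ioi L, ‖⟪f, expT A t (g : H)⟫‖ ^ 2
        = ∑' g : G, ∫ t in Set.Ici (0 : ℝ),
            ‖⟪ContinuousLinearMap.adjoint (expT A L) f, expT A t (g : H)⟫‖ ^ 2 :=
          tsum_congr fun g => htail (g : H)
      _ ≤ C * ‖ContinuousLinearMap.adjoint (expT A L) f‖ ^ 2 := hup'
      _ ≤ C * (M * Real.exp (ω * L) * ‖f‖) ^ 2 := by
          have h2 : ‖ContinuousLinearMap.adjoint (expT A L) f‖ ^ 2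
              ≤ (M * Real.exp (ω * L) * ‖f‖) ^ 2 :=
            pow_le_pow_left₀ (norm_nonneg _) hadj 2
          exact mul_le_mul_of_nonneg_left h2 hC.le
      _ ≤ (c / 2) * ‖f‖ ^ 2 := by
          have h := mul_le_mul_of_nonneg_right htailconst (sq_nonneg ‖f‖)
          nlinarith [h]
  have hSbig : Summable (fun g : G => ∫ t in Set.Ici (0 : ℝ), ‖⟪f, expT A t (g : H)⟫‖ ^ 2) := by
    by_contra h
    rw [tsum_eq_zero_of_not_summable h] at hlow
    nlinarith [mul_pos hc (pow_pos hnf 2)]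
  have hSicc : Summable (fun g : G => ∫ t in Set.Icc 0 L, ‖⟪f, expT A t (g : H)⟫‖ ^ 2) :=
    Summable.of_nonneg_of_le (fun g => hnn _ _)
      (fun g => by rw [key (g : H)]; linarith [hnn (Set.Ioi L) (g : H)]) hSbig
  have hStail : Summable (fun g : G => ∫ t in Set.Ioi L, ‖⟪f, expT A t (g : H)⟫‖ ^ 2) :=
    Summable.of_nonneg_of_le (fun g => hnn _ _)
      (fun g => by rw [key (g : H)]; linarith [hnn (Set.Icc 0 L) (g : H)]) hSbig
  have hsum : ∑' g : G, ∫ t in Set.Ici (0 : ℝ), ‖⟪f, expT A t (g : H)⟫‖ ^ 2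
      = (∑' g : G, ∫ t in Set.Icc 0 L, ‖⟪f, expT A t (g : H)⟫‖ ^ 2)
        + ∑' g : G, ∫ t in Set.Ioi L, ‖⟪f, expT A t (g : H)⟫‖ ^ 2 := by
    rw [← Summable.tsum_add hSicc hStail]
    exact tsum_congr fun g => key (g : H)
  constructor
  · linarith
  · calc ∑' g : G, ∫ t in Set.Icc 0 L, ‖⟪f, expT A t (g : H)⟫‖ ^ 2
        ≤ ∑' g : G, ∫ t in Set.Ici (0 : ℝ), ‖⟪f, expT A t (g : H)⟫‖ ^ 2 :=
          Summable.tsum_le_tsum (fun g => by rw [key (g : H)]; linarith [hnn (Set.Ioi L) (g : H)])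
            hSicc hSbig
      _ ≤ C * ‖f‖ ^ 2 := hup
end
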